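/- Let $n \in \mathbb{N}$ and $a_1,\dots,a_n > 0$ satisfy $a_i = a_{n+1-i}$ for all $i$ and $a_i \le a_{i+1}$ for $1 \le i < \lceil n/2 \rceil$. Setting $a_0 = a_{n+1} = 0$, we have $\max_{1\le i\le n} \frac{a_{i-1} + a_{i+1}}{a_i} \ge 2\cos\big(\frac{\pi}{n+1}\big)$. -/

import Mathlib

open Real

/-- Let `a 1, …, a n` be positive reals with `a i = a (n+1-i)` and `a i ≤ a (i+1)` for
`1 ≤ i < ⌈n/2⌉`, and with `a 0 = a (n+1) = 0`. Then
`max_{1 ≤ i ≤ n} (a (i-1) + a (i+1)) / a i ≥ 2 cos(π/(n+1))`. -/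
theorem stmt_6 (n : ℕ) (hn : 1 ≤ n) (a : ℕ → ℝ)
    (hpos : ∀ i ∈ Finset.Icc 1 n, 0 < a i)
    (h0 : a 0 = 0) (hn1 : a (n + 1) = 0)
    (hsym : ∀ i ∈ Finset.Icc 1 n, a i = a (n + 1 - i))
    (hmono : ∀ i, 1 ≤ i → i < (n + 1) / 2 → a i ≤ a (i + 1)) :
    2 * Real.cos (π / (n + 1)) ≤
      sSup {x | ∃ i ∈ Finset.Icc 1 n, x = (a (i - 1) + a (i + 1)) / a i} := by
  by_contra hcon
  push_neg at hcon
  set S : Set ℝ := {x | ∃ i ∈ Finset.Icc 1 n, x = (a (i - 1) + a (i + 1)) / a i} with hS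
  have hSeq : S = ↑((Finset.Icc 1 n).image (fun i => (a (i - 1) + a (i + 1)) / a i)) := by
    ext x; simp [hS, eq_comm]
  have hbdd : BddAbove S := by rw [hSeq]; exact Finset.bddAbove _
  set θ := π / (n + 1) with hθ
  have hn1pos : (0:ℝ) < (n:ℝ) + 1 := by positivity
  have hθpos : 0 < θ := div_pos Real.pi_pos hn1pos
  set lam := 2 * Real.cos θ with hlam
  have key : ∀ i ∈ Finset.Icc 1 n, a (i-1) + a (i+1) < lam * a i := by
    intro i hi
    have hai := hpos i hi
    have hx : (a (i-1) + a (i+1)) / a i ≤ sSup S := le_csSup hbdd ⟨i, hi, rfl⟩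
    have hlt := lt_of_le_of_lt hx hcon
    rw [div_lt_iff₀ hai] at hlt
    linarith
  set b : ℕ → ℝ := fun i => Real.sin (i * θ) with hb
  have hb0 : b 0 = 0 := by simp [hb]
  have hbn1 : b (n+1) = 0 := by
    have h1 : ((n:ℝ)+1) * θ = π := by rw [hθ]; field_simp
    simp only [hb]
    push_cast
    rw [h1, Real.sin_pi]
  have hbpos : ∀ i ∈ Finset.Icc 1 n, 0 < b i := by
    intro i hi
    rw [Finset.mem_Icc] at hi
    apply Real.sin_pos_of_pos_of_lt_pi
    · have : (0:ℝ) < (i:ℝ) := by exact_mod_cast hi.1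
      positivity
    · have h2 : (i:ℝ) < (n:ℝ) + 1 := by
        have : (i:ℝ) ≤ (n:ℝ) := by exact_mod_cast hi.2
        linarith
      have h1 : ((n:ℝ)+1) * θ = π := by rw [hθ]; field_simp
      calc (i:ℝ) * θ < ((n:ℝ)+1) * θ := by
            exact mul_lt_mul_of_pos_right h2 hθpos
        _ = π := h1
  have hrec : ∀ i, 1 ≤ i → b (i-1) + b (i+1) = lam * b i := by
    intro i hi
    have h1 : ((i-1 : ℕ) : ℝ) = (i:ℝ) - 1 := by
      have h := Nat.cast_sub (R := ℝ) hi
      simpa using h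
    simp only [hb, h1]
    push_cast
    rw [sub_mul, add_mul, one_mul, Real.sin_sub, Real.sin_add, hlam]
    ring
  -- sums
  set T := ∑ i ∈ Finset.range (n+1), b i * a (i+1) with hT
  set U := ∑ i ∈ Finset.range (n+1), b (i+1) * a i with hU
  have hA1 : ∑ i ∈ Finset.Icc 1 n, b i * a (i-1) = U := by
    rw [← Finset.Ico_add_one_right_eq_Icc, Finset.sum_Ico_eq_sum_range, Nat.add_sub_cancel, hU, Finset.sum_range_succ, hbn1]
    simp [add_comm 1]
  have hA2 : ∑ i ∈ Finset.Icc 1 n, b i * a (i+1) = T := by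
    rw [← Finset.Ico_add_one_right_eq_Icc, Finset.sum_Ico_eq_sum_range, Nat.add_sub_cancel, hT, Finset.sum_range_succ', hb0]
    simp [add_comm 1]
  have hB1 : ∑ i ∈ Finset.Icc 1 n, a i * b (i-1) = T := by
    rw [← Finset.Ico_add_one_right_eq_Icc, Finset.sum_Ico_eq_sum_range, Nat.add_sub_cancel, hT, Finset.sum_range_succ, hn1]
    simp [mul_comm, add_comm 1]
  have hB2 : ∑ i ∈ Finset.Icc 1 n, a i * b (i+1) = U := by
    rw [← Finset.Ico_add_one_right_eq_Icc, Finset.sum_Ico_eq_sum_range, Nat.add_sub_cancel, hU, Finset.sum_range_succ', h0]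
    simp [mul_comm, add_comm 1]
  have hLeq : ∑ i ∈ Finset.Icc 1 n, b i * (a (i-1) + a (i+1))
      = ∑ i ∈ Finset.Icc 1 n, b i * (lam * a i) := by
    have e1 : ∑ i ∈ Finset.Icc 1 n, b i * (a (i-1) + a (i+1)) = U + T := by
      simp only [mul_add, Finset.sum_add_distrib, hA1, hA2]
    have e2 : ∑ i ∈ Finset.Icc 1 n, b i * (lam * a i)
        = ∑ i ∈ Finset.Icc 1 n, a i * (b (i-1) + b (i+1)) := by
      apply Finset.sum_congr rfl
      intro i hi
      rw [Finset.mem_Icc] at hi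
      rw [hrec i hi.1]
      ring
    have e3 : ∑ i ∈ Finset.Icc 1 n, a i * (b (i-1) + b (i+1)) = T + U := by
      simp only [mul_add, Finset.sum_add_distrib, hB1, hB2]
    rw [e1, e2, e3]; ring
  have hLlt : ∑ i ∈ Finset.Icc 1 n, b i * (a (i-1) + a (i+1))
      < ∑ i ∈ Finset.Icc 1 n, b i * (lam * a i) := by
    apply Finset.sum_lt_sum_of_nonempty
    · exact ⟨1, Finset.mem_Icc.mpr ⟨le_refl 1, hn⟩⟩
    · intro i hi
      exact mul_lt_mul_of_pos_left (key i hi) (hbpos i hi)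
  exact absurd hLeq (ne_of_lt hLlt)
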